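/- The group G₂ admits a left-invariant linear order: there exists a linear order ≤ on G₂ such that for all g, h, k ∈ G₂, h ≤ k implies g·h ≤ g·k. -/

import Mathlib

/-- The group `G₂ = ⟨α, β, γ ∣ αβα⁻¹ = β⁻¹, βγβ⁻¹ = γ⁻¹⟩`, as the presented
group on three generators with relators `αβα⁻¹β` and `βγβ⁻¹γ`. -/
abbrev G₂ : Type :=
  PresentedGroup ({FreeGroup.of 0 * FreeGroup.of 1 * (FreeGroup.of 0)⁻¹ * FreeGroup.of 1,
    FreeGroup.of 1 * FreeGroup.of 2 * (FreeGroup.of 1)⁻¹ * FreeGroup.of 2} :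
    Set (FreeGroup (Fin 3)))

namespace G2Aux
open Finset List

abbrev Series : Type := List ℤ → ℤ

def mulF (f g : Series) : Series := fun w =>
  ∑ k ∈ range (w.length + 1), f (w.take k) * g (w.drop k)

def oneF : Series := fun w => if w = [] then 1 else 0

lemma mulF_assoc (f g h : Series) : mulF (mulF f g) h = mulF f (mulF g h) := by
  funext w
  set L := w.length with hL
  calc mulF (mulF f g) h w
      = ∑ n ∈ range (L + 1), ∑ m ∈ range (L + 1),
          (if m ≤ n then f (w.take m) * (g ((w.take n).drop m) * h (w.drop n)) else 0) := by
        rw [mulF]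
        refine Finset.sum_congr rfl fun n hn => ?_
        rw [Finset.mem_range] at hn
        have hlen : (w.take n).length = n := by rw [List.length_take]; omega
        rw [mulF, hlen, Finset.sum_mul]
        rw [← Finset.sum_subset (Finset.range_subset_range.2 (by omega : n + 1 ≤ L + 1))
          (fun m _ hm' => by
            rw [Finset.mem_range, not_lt] at hm'
            rw [if_neg (by omega)])]
        refine Finset.sum_congr rfl fun m hm => ?_
        rw [Finset.mem_range] at hm
        rw [if_pos (by omega : m ≤ n), List.take_take, min_eq_left (by omega : m ≤ n),
          mul_assoc]
    _ = ∑ m ∈ range (L + 1), ∑ n ∈ range (L + 1),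
          (if m ≤ n then f (w.take m) * (g ((w.take n).drop m) * h (w.drop n)) else 0) :=
        Finset.sum_comm
    _ = mulF f (mulF g h) w := by
        rw [mulF]
        refine Finset.sum_congr rfl fun m hm => ?_
        rw [Finset.mem_range] at hm
        have hlen : (w.drop m).length = L - m := by rw [List.length_drop]
        rw [mulF, hlen, Finset.mul_sum]
        have h1 : ∑ n ∈ range (L + 1), (if m ≤ n then f (w.take m) * (g ((w.take n).drop m) * h (w.drop n)) else 0)
            = ∑ n ∈ Finset.Ico m (L + 1), f (w.take m) * (g (((w.take n).drop m)) * h (w.drop n)) := by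
          have hsub : Finset.Ico m (L + 1) ⊆ Finset.range (L + 1) := by
            rw [Finset.range_eq_Ico]
            exact Finset.Ico_subset_Ico (Nat.zero_le m) le_rfl
          rw [← Finset.sum_subset hsub
            (fun n hn hn' => by
              rw [Finset.mem_range] at hn
              rw [Finset.mem_Ico, not_and_or, not_le, not_lt] at hn'
              rcases hn' with h' | h'
              · rw [if_neg (by omega)]
              · omega)]
          refine Finset.sum_congr rfl fun n hn => ?_
          rw [Finset.mem_Ico] at hn
          rw [if_pos hn.1]
        rw [h1, Finset.sum_Ico_eq_sum_range]
        refine Finset.sum_congr (congrArg Finset.range (by omega : L + 1 - m = L - m + 1)) fun k hk => ?_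
        rw [List.drop_take, show m + k - m = k by omega, ← List.drop_drop]


/-- inverse with fuel -/
def invAux (f : Series) : ℕ → Series
  | 0 => fun w => if w = [] then 1 else 0
  | n + 1 => fun w =>
      if w = [] then 1 else
        - ∑ k ∈ range w.length, invAux f n (w.take k) * f (w.drop k)

lemma invAux_stable (f : Series) : ∀ n, ∀ w : List ℤ, w.length ≤ n →
    invAux f (n + 1) w = invAux f n w := by
  intro n
  induction n with
  | zero =>
    intro w hw
    have : w = [] := List.length_eq_zero_iff.mp (Nat.le_zero.mp hw)
    subst this
    simp [invAux]
  | succ n ih =>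
    intro w hw
    rcases eq_or_ne w [] with rfl | hne
    · simp [invAux]
    · show (if w = [] then 1 else - ∑ k ∈ range w.length, invAux f (n+1) (w.take k) * f (w.drop k))
        = (if w = [] then 1 else - ∑ k ∈ range w.length, invAux f n (w.take k) * f (w.drop k))
      rw [if_neg hne, if_neg hne]
      congr 1
      refine Finset.sum_congr rfl fun k hk => ?_
      rw [Finset.mem_range] at hk
      rw [ih (w.take k) (by rw [List.length_take]; omega)]

lemma invAux_ge (f : Series) : ∀ n m, ∀ w : List ℤ, w.length ≤ n → n ≤ m →
    invAux f m w = invAux f n w := by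
  intro n m w hw hnm
  induction m with
  | zero =>
    have : n = 0 := by omega
    subst this; rfl
  | succ m ih =>
    rcases Nat.lt_or_ge n (m+1) with h | h
    · rw [invAux_stable f m w (by omega), ih (by omega)]
    · have : n = m + 1 := by omega
      subst this; rfl

def invF (f : Series) : Series := fun w => invAux f w.length w

lemma invF_nil (f : Series) : invF f [] = 1 := rfl

lemma invF_ne_nil (f : Series) {w : List ℤ} (h : w ≠ []) :
    invF f w = - ∑ k ∈ range w.length, invF f (w.take k) * f (w.drop k) := by
  have hlen : w.length ≠ 0 := by simpa using h
  have key : invF f w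
      = if w = [] then 1 else
        - ∑ k ∈ range w.length, invAux f (w.length - 1) (w.take k) * f (w.drop k) := by
    show invAux f w.length w = _
    conv_lhs => rw [show w.length = (w.length - 1) + 1 by omega]
    rfl
  rw [key, if_neg h]
  congr 1
  refine Finset.sum_congr rfl fun k hk => ?_
  rw [Finset.mem_range] at hk
  have h1 : (w.take k).length = k := by rw [List.length_take]; omega
  rw [show invF f (w.take k) = invAux f (w.take k).length (w.take k) from rfl, h1]
  rw [invAux_ge f k (w.length - 1) (w.take k) (by omega) (by omega)]

lemma invF_mulF (f : Series) (hf : f [] = 1) : mulF (invF f) f = oneF := by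
  funext w
  rcases eq_or_ne w [] with rfl | hne
  · show mulF (invF f) f [] = oneF []
    simp only [mulF, List.length_nil, zero_add, Finset.range_one, Finset.sum_singleton,
      List.take_nil, List.drop_nil]
    rw [invF_nil, hf, one_mul]
    rfl
  · show ∑ k ∈ range (w.length + 1), invF f (w.take k) * f (w.drop k) = oneF w
    rw [Finset.sum_range_succ, List.take_length, List.drop_length, hf, mul_one,
      invF_ne_nil f hne]
    simp [oneF, hne]

/-- The "Magnus" group: series with constant term 1. -/
def Mag : Type := {f : Series // f [] = 1}

namespace Mag

instance : One Mag := ⟨⟨oneF, rfl⟩⟩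
instance : Mul Mag := ⟨fun f g => ⟨mulF f.1 g.1, by
  show mulF f.1 g.1 [] = 1
  show ∑ k ∈ range 1, _ = 1
  rw [Finset.sum_range_one]
  show f.1 [] * g.1 [] = 1
  rw [f.2, g.2, one_mul]⟩⟩
instance : Inv Mag := ⟨fun f => ⟨invF f.1, invF_nil f.1⟩⟩

lemma mul_def (f g : Mag) : (f * g).1 = mulF f.1 g.1 := rfl
lemma one_def : (1 : Mag).1 = oneF := rfl
lemma inv_def (f : Mag) : (f⁻¹).1 = invF f.1 := rfl

lemma oneF_mulF (f : Series) : mulF oneF f = f := by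
  funext w
  rw [mulF, Finset.sum_eq_single 0]
  · simp [oneF]
  · intro k hk hk0
    have h1 : w.take k ≠ [] := by
      rcases w with _ | ⟨a, t⟩
      · simp at hk; omega
      · cases k with
        | zero => exact absurd rfl hk0
        | succ n => simp
    rw [show oneF (w.take k) = 0 from if_neg h1, zero_mul]
  · intro h; simp at h



instance : Group Mag :=
  Group.ofLeftAxioms
    (fun a b c => Subtype.ext (mulF_assoc a.1 b.1 c.1))
    (fun a => Subtype.ext (oneF_mulF a.1))
    (fun a => Subtype.ext (invF_mulF a.1 a.2))

end Mag

namespace Mag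

def gen (a : ℤ) : Mag := ⟨fun w => if w = [] ∨ w = [a] then 1 else 0, by simp⟩

def IsPow (a : ℤ) (f : Mag) : Prop := ∀ w : List ℤ, f.1 w ≠ 0 → w = List.replicate w.length a

lemma isPow_one (a : ℤ) : IsPow a 1 := by
  intro w hw
  have : w = [] := by
    by_contra h
    exact hw (if_neg h)
  subst this; rfl

lemma isPow_gen (a : ℤ) : IsPow a (gen a) := by
  intro w hw
  have : w = [] ∨ w = [a] := by
    by_contra h
    exact hw (if_neg h)
  rcases this with rfl | rfl <;> rfl

lemma isPow_mul {a : ℤ} {f g : Mag} (hf : IsPow a f) (hg : IsPow a g) : IsPow a (f * g) := by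
  intro w hw
  rw [mul_def] at hw
  obtain ⟨k, hk, hne⟩ := Finset.exists_ne_zero_of_sum_ne_zero hw
  have e1 := hf _ (left_ne_zero_of_mul hne)
  have e2 := hg _ (right_ne_zero_of_mul hne)
  calc w = w.take k ++ w.drop k := (List.take_append_drop k w).symm
    _ = List.replicate (w.take k).length a ++ List.replicate (w.drop k).length a := by
        rw [← e1, ← e2]
    _ = List.replicate ((w.take k).length + (w.drop k).length) a :=
        (List.replicate_add _ _ _).symm
    _ = List.replicate w.length a := by
        rw [← List.length_append, List.take_append_drop]

lemma isPow_inv {a : ℤ} {f : Mag} (hf : IsPow a f) : IsPow a f⁻¹ := by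
  have key : ∀ n (w : List ℤ), w.length ≤ n → (f⁻¹).1 w ≠ 0 → w = List.replicate w.length a := by
    intro n
    induction n with
    | zero =>
      intro w hw _
      rw [List.length_eq_zero_iff.mp (Nat.le_zero.mp hw)]; rfl
    | succ n ih =>
      intro w hw hne
      rcases eq_or_ne w [] with rfl | h
      · rfl
      · rw [inv_def, invF_ne_nil f.1 h] at hne
        have hne' : ∑ k ∈ range w.length, invF f.1 (w.take k) * f.1 (w.drop k) ≠ 0 := by
          intro hc; rw [hc, neg_zero] at hne; exact hne rfl
        obtain ⟨k, hk, hprod⟩ := Finset.exists_ne_zero_of_sum_ne_zero hne'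
        rw [Finset.mem_range] at hk
        have e1 := ih (w.take k) (by rw [List.length_take]; omega)
          (left_ne_zero_of_mul hprod)
        have e2 := hf _ (right_ne_zero_of_mul hprod)
        calc w = w.take k ++ w.drop k := (List.take_append_drop k w).symm
          _ = List.replicate (w.take k).length a ++ List.replicate (w.drop k).length a := by
              rw [← e1, ← e2]
          _ = List.replicate ((w.take k).length + (w.drop k).length) a :=
              (List.replicate_add _ _ _).symm
          _ = List.replicate w.length a := by
              rw [← List.length_append, List.take_append_drop]
  intro w
  exact key w.length w le_rfl

lemma isPow_pow (a : ℤ) (n : ℕ) : IsPow a (gen a ^ n) := by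
  induction n with
  | zero => simpa using isPow_one a
  | succ n ih =>
    rw [pow_succ]
    exact isPow_mul ih (isPow_gen a)

lemma isPow_zpow (a : ℤ) (e : ℤ) : IsPow a (gen a ^ e) := by
  cases e with
  | ofNat n => rw [Int.ofNat_eq_coe, zpow_natCast]; exact isPow_pow a n
  | negSucc n => rw [zpow_negSucc]; exact isPow_inv (isPow_pow a (n+1))

lemma coeff_single_mul (f g : Mag) (a : ℤ) : (f * g).1 [a] = f.1 [a] + g.1 [a] := by
  show mulF f.1 g.1 [a] = _
  rw [mulF]
  show ∑ k ∈ range 2, f.1 ([a].take k) * g.1 ([a].drop k) = _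
  rw [Finset.sum_range_succ, Finset.sum_range_one]
  simp only [List.take_zero, List.drop_zero, List.take_one, List.drop_one]
  simp only [List.head?, List.tail]
  rw [f.2]
  show 1 * g.1 [a] + f.1 [a] * g.1 [] = _
  rw [g.2, one_mul, mul_one, add_comm]

def coeffHom (a : ℤ) : Mag →* Multiplicative ℤ where
  toFun f := Multiplicative.ofAdd (f.1 [a])
  map_one' := by
    show Multiplicative.ofAdd ((1 : Mag).1 [a]) = 1
    have : (1 : Mag).1 [a] = 0 := by
      rw [one_def]
      exact if_neg (by simp)
    rw [this]; rfl
  map_mul' f g := by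
    show Multiplicative.ofAdd ((f * g).1 [a]) = _
    rw [coeff_single_mul]
    rfl

lemma coeff_single_zpow (a e : ℤ) : (gen a ^ e).1 [a] = e := by
  have h := map_zpow (coeffHom a) (gen a) e
  have h1 : coeffHom a (gen a) = Multiplicative.ofAdd 1 := by
    show Multiplicative.ofAdd ((gen a).1 [a]) = _
    have : (gen a).1 [a] = 1 := if_pos (Or.inr rfl)
    rw [this]
  rw [h1, ← ofAdd_zsmul, smul_eq_mul, mul_one] at h
  exact Multiplicative.ofAdd.injective h

def prodPow (ps : List (ℤ × ℤ)) : Mag := (ps.map (fun p => gen p.1 ^ p.2)).prod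

lemma prodPow_nil : prodPow [] = 1 := rfl

lemma prodPow_cons (p : ℤ × ℤ) (ps : List (ℤ × ℤ)) :
    prodPow (p :: ps) = gen p.1 ^ p.2 * prodPow ps := by
  simp [prodPow]

lemma coeff_zpow_nil (a e : ℤ) : (gen a ^ e).1 [] = 1 := (gen a ^ e).2

lemma take_repl_contra {V : List ℤ} (hc : V.Chain' (· ≠ ·)) {k : ℕ} (hk2 : 2 ≤ k)
    (hkV : k ≤ V.length) {a : ℤ} (h : V.take k = List.replicate (V.take k).length a) : False := by
  rcases V with _ | ⟨v0, V'⟩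
  · simp at hkV; omega
  rcases V' with _ | ⟨v1, V''⟩
  · simp at hkV; omega
  obtain ⟨k', rfl⟩ : ∃ k', k = k' + 2 := ⟨k - 2, by omega⟩
  have hlen : (List.take (k' + 2) (v0 :: v1 :: V'')).length = k' + 2 := by
    rw [List.length_take]; simp at hkV ⊢; omega
  rw [hlen] at h
  have h0 : v0 = a := by
    have := congrArg (fun l => l.head?) h
    simpa [List.replicate_succ] using this
  have h1 : v1 = a := by
    have := congrArg (fun l => l.tail.head?) h
    simp [List.replicate_succ] at this
    exact this
  simp only [List.Chain', List.isChain_cons_cons] at hc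
  exact hc.1 (h0.trans h1.symm)

lemma coeff_long : ∀ (ps : List (ℤ × ℤ)) (V : List ℤ), V.Chain' (· ≠ ·) →
    ps.length < V.length → (prodPow ps).1 V = 0 := by
  intro ps
  induction ps with
  | nil =>
    intro V hc hl
    show oneF V = 0
    apply if_neg
    intro h; subst h; simp at hl
  | cons p ps ih =>
    intro V hc hl
    rw [prodPow_cons, mul_def]
    apply Finset.sum_eq_zero
    intro k hk
    rw [Finset.mem_range] at hk
    rcases Nat.lt_or_ge k 2 with hk2 | hk2
    · interval_cases k
      · rw [List.take_zero, List.drop_zero, coeff_zpow_nil, one_mul]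
        exact ih V hc (by simp at hl ⊢; omega)
      · rw [ih (V.drop 1) (by rw [List.drop_one]; exact hc.tail)
          (by rw [List.length_drop]; simp at hl ⊢; omega), mul_zero]
    · have hz : (gen p.1 ^ p.2).1 (V.take k) = 0 := by
        by_contra h
        exact take_repl_contra hc hk2 (by omega) (isPow_zpow p.1 p.2 _ h)
      rw [hz, zero_mul]

lemma coeff_exact : ∀ ps : List (ℤ × ℤ), ((ps.map Prod.fst).Chain' (· ≠ ·)) →
    (prodPow ps).1 (ps.map Prod.fst) = (ps.map Prod.snd).prod := by
  intro ps
  induction ps with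
  | nil =>
    intro _
    show oneF [] = 1
    rfl
  | cons p ps ih =>
    intro hc
    rw [prodPow_cons, mul_def]
    have hlen : ((p :: ps).map Prod.fst).length = ps.length + 1 := by simp
    rw [mulF, hlen]
    rw [Finset.sum_eq_single 1]
    · have ht : ((p :: ps).map Prod.fst).take 1 = [p.1] := rfl
      have hd : ((p :: ps).map Prod.fst).drop 1 = ps.map Prod.fst := rfl
      rw [ht, hd, coeff_single_zpow, ih (by simpa [List.Chain'] using hc.tail)]
      simp
    · intro k hk hk1
      rw [Finset.mem_range] at hk
      rcases Nat.lt_or_ge k 2 with hk2 | hk2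
      · interval_cases k
        · rw [List.take_zero, List.drop_zero, coeff_zpow_nil, one_mul]
          rw [coeff_long ps _ hc (by simp)]
        · omega
      · have hz : (gen p.1 ^ p.2).1 (((p :: ps).map Prod.fst).take k) = 0 := by
          by_contra h
          exact take_repl_contra hc hk2 (by rw [hlen]; omega) (isPow_zpow p.1 p.2 _ h)
        rw [hz, zero_mul]
    · intro h
      exact absurd (Finset.mem_range.mpr (by omega)) h

end Mag

/-! ### Syllables of reduced words, and injectivity of the Magnus map -/

def Rel (p q : ℤ × Bool) : Prop := ¬(p.1 = q.1 ∧ q.2 = !p.2)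

def Reduced (L : List (ℤ × Bool)) : Prop := L.Chain' Rel

lemma exists_decomp : ∀ L : List (ℤ × Bool), ¬ Reduced L →
    ∃ (L₁ : List (ℤ × Bool)) (a : ℤ) (b : Bool) (L₂ : List (ℤ × Bool)),
      L = L₁ ++ (a, b) :: (a, !b) :: L₂ := by
  intro L
  induction L with
  | nil => intro h; exact absurd List.isChain_nil h
  | cons p t ih =>
    intro h
    cases t with
    | nil => exact absurd (List.isChain_singleton p) h
    | cons q t' =>
      simp only [Reduced, List.Chain', List.isChain_cons_cons] at h
      rcases not_and_or.mp h with h1 | h2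
      · rw [Rel, not_not] at h1
        refine ⟨[], p.1, p.2, t', ?_⟩
        have hq : q = (p.1, !p.2) := Prod.ext h1.1.symm h1.2
        rw [List.nil_append, ← hq]
      · obtain ⟨L₁, a, b, L₂, hd⟩ := ih h2
        exact ⟨p :: L₁, a, b, L₂, by rw [hd]; rfl⟩

lemma reduced_toWord (x : FreeGroup ℤ) : Reduced x.toWord := by
  by_contra h
  obtain ⟨L₁, a, b, L₂, hdec⟩ := exists_decomp _ h
  exact FreeGroup.reduce.not (L₁ := x.toWord) (L₂ := L₁) (L₃ := L₂) (x := a) (b := b)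
    (by rw [FreeGroup.reduce_toWord, hdec])

def sgn (b : Bool) : ℤ := if b then 1 else -1

lemma sgn_ne_zero (b : Bool) : sgn b ≠ 0 := by cases b <;> decide

def sylls : List (ℤ × Bool) → List (ℤ × ℤ)
  | [] => []
  | (a, b) :: t =>
    match sylls t with
    | [] => [(a, sgn b)]
    | (a', e) :: r => if a = a' then (a, sgn b + e) :: r else (a, sgn b) :: (a', e) :: r

lemma sylls_cons (a : ℤ) (b : Bool) (t : List (ℤ × Bool)) :
    sylls ((a, b) :: t) =
      match sylls t with
      | [] => [(a, sgn b)]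
      | (a', e) :: r => if a = a' then (a, sgn b + e) :: r else (a, sgn b) :: (a', e) :: r := rfl

lemma of_zpow_sgn (a : ℤ) (b : Bool) : FreeGroup.mk [(a, b)] = FreeGroup.of a ^ (sgn b) := by
  cases b
  · show FreeGroup.mk [(a, false)] = FreeGroup.of a ^ (-1 : ℤ)
    rw [zpow_neg_one]
    show FreeGroup.mk [(a, false)] = (FreeGroup.mk [(a, true)])⁻¹
    rw [FreeGroup.inv_mk]
    rfl
  · show FreeGroup.mk [(a, true)] = FreeGroup.of a ^ (1 : ℤ)
    rw [zpow_one]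
    rfl

lemma sylls_nil : sylls [] = [] := rfl

lemma sylls_good : ∀ L : List (ℤ × Bool), Reduced L →
    ((((sylls L).map Prod.fst).Chain' (· ≠ ·))
      ∧ (∀ p ∈ sylls L, p.2 ≠ 0)
      ∧ FreeGroup.mk L = ((sylls L).map (fun p => FreeGroup.of p.1 ^ p.2)).prod)
    ∧ (∀ (p : ℤ × Bool) (t : List (ℤ × Bool)), L = p :: t →
        ∃ e r, sylls L = (p.1, e) :: r ∧ (0 < e ↔ p.2 = true) ∧ e ≠ 0) := by
  intro L
  induction L with
  | nil =>
    intro _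
    refine ⟨⟨List.isChain_nil, by simp [sylls_nil], ?_⟩, ?_⟩
    · show FreeGroup.mk [] = 1
      exact FreeGroup.one_eq_mk.symm
    · intro p t h; exact absurd h (by simp)
  | cons p t ih =>
    intro hr
    obtain ⟨a, b⟩ := p
    have ht : Reduced t := hr.tail
    obtain ⟨⟨ihchain, ihnz, ihprod⟩, ihhead⟩ := ih ht
    have hmk : FreeGroup.mk ((a, b) :: t) = FreeGroup.of a ^ (sgn b) * FreeGroup.mk t := by
      rw [show (a, b) :: t = [(a, b)] ++ t from rfl, ← FreeGroup.mul_mk, of_zpow_sgn]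
    rcases t with _ | ⟨⟨a₂, b₂⟩, t'⟩
    · have hs : sylls [(a, b)] = [(a, sgn b)] := rfl
      refine ⟨⟨?_, ?_, ?_⟩, ?_⟩
      · rw [hs]; exact List.isChain_singleton _
      · rw [hs]; intro q hq
        rw [List.mem_singleton] at hq
        subst hq
        exact sgn_ne_zero b
      · rw [hs, hmk]
        show _ = FreeGroup.of a ^ (sgn b) * 1
        rw [mul_one,
          show FreeGroup.mk ([] : List (ℤ × Bool)) = 1 from FreeGroup.one_eq_mk.symm, mul_one]
      · intro p' t'' h
        injection h with h1 h2
        subst h1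
        exact ⟨sgn b, [], rfl, by cases b <;> simp [sgn], sgn_ne_zero b⟩
    · obtain ⟨e, r, hst, hsign, hnz⟩ := ihhead (a₂, b₂) t' rfl
      rcases eq_or_ne a a₂ with rfl | hne
      · -- merge case: b₂ = b by reducedness
        have hb : b₂ = b := by
          have hrel : Rel (a, b) (a, b₂) := (List.isChain_cons_cons.mp hr).1
          rw [Rel] at hrel
          by_contra hbb
          exact hrel ⟨rfl, by cases b <;> cases b₂ <;> simp_all⟩
        subst hb
        have hs : sylls ((a, b₂) :: (a, b₂) :: t') = (a, sgn b₂ + e) :: r := by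
          rw [sylls_cons, hst]
          simp
        have hsum_sign : (0 < sgn b₂ + e ↔ b₂ = true) ∧ sgn b₂ + e ≠ 0 := by
          cases b₂ <;> simp [sgn] at hsign ⊢ <;> omega
        refine ⟨⟨?_, ?_, ?_⟩, ?_⟩
        · rw [hs]
          have := ihchain
          rw [hst] at this
          simpa using this
        · rw [hs]
          intro q hq
          rcases List.mem_cons.mp hq with rfl | hq'
          · exact hsum_sign.2
          · exact ihnz q (by rw [hst]; exact List.mem_cons_of_mem _ hq')
        · rw [hs, hmk, ihprod, hst]
          simp only [List.map_cons, List.prod_cons]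
          rw [← mul_assoc, ← zpow_add]
        · intro p' t'' h
          injection h with h1 h2
          subst h1
          exact ⟨sgn b₂ + e, r, hs, hsum_sign.1, hsum_sign.2⟩
      · -- no merge
        have hs : sylls ((a, b) :: (a₂, b₂) :: t') = (a, sgn b) :: (a₂, e) :: r := by
          rw [sylls_cons, hst]
          simp [hne]
        refine ⟨⟨?_, ?_, ?_⟩, ?_⟩
        · rw [hs]
          simp only [List.map_cons]
          simp only [List.Chain', List.isChain_cons_cons]
          refine ⟨hne, ?_⟩
          have := ihchain
          rw [hst] at this
          simpa [List.Chain'] using this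
        · rw [hs]
          intro q hq
          rcases List.mem_cons.mp hq with rfl | hq'
          · exact sgn_ne_zero b
          · exact ihnz q (by rw [hst]; exact hq')
        · rw [hs, hmk, ihprod, hst]
          simp only [List.map_cons, List.prod_cons]
        · intro p' t'' h
          injection h with h1 h2
          subst h1
          exact ⟨sgn b, (a₂, e) :: r, hs, by cases b <;> simp [sgn], sgn_ne_zero b⟩

/-! ### The Magnus homomorphism and its injectivity -/

def mu : FreeGroup ℤ →* Mag := FreeGroup.lift Mag.gen

lemma mu_mk_sylls (x : FreeGroup ℤ) (h : Reduced x.toWord) :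
    mu x = Mag.prodPow (sylls x.toWord) := by
  obtain ⟨⟨_, _, hprod⟩, _⟩ := sylls_good x.toWord h
  conv_lhs => rw [← FreeGroup.mk_toWord (x := x)]
  rw [hprod, map_list_prod, List.map_map, Mag.prodPow]
  congr 1
  apply List.map_congr_left
  intro p _
  show mu (FreeGroup.of p.1 ^ p.2) = _
  rw [map_zpow]
  show (FreeGroup.lift Mag.gen) (FreeGroup.of p.1) ^ p.2 = _
  rw [FreeGroup.lift_apply_of]

lemma mu_injective : Function.Injective mu := by
  rw [injective_iff_map_eq_one]
  intro x hx
  by_contra hne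
  have hL : x.toWord ≠ [] := fun h => hne (FreeGroup.toWord_eq_nil_iff.mp h)
  have hred : Reduced x.toWord := reduced_toWord x
  obtain ⟨⟨hchain, hnz, _⟩, hhead⟩ := sylls_good x.toWord hred
  rcases hT : x.toWord with _ | ⟨⟨a, b⟩, t⟩
  · exact hL hT
  obtain ⟨e, r, hs, _, _⟩ := hhead (a, b) t hT
  have h1 : mu x = Mag.prodPow (sylls x.toWord) := mu_mk_sylls x hred
  have h2 := Mag.coeff_exact (sylls x.toWord) hchain
  have h3 : ((sylls x.toWord).map Prod.snd).prod ≠ 0 := by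
    apply List.prod_ne_zero
    intro hmem
    obtain ⟨p, hp, hp0⟩ := List.mem_map.mp hmem
    exact hnz p hp hp0
  rw [← h1, hx] at h2
  have h4 : (1 : Mag).1 ((sylls x.toWord).map Prod.fst) = 0 := by
    rw [Mag.one_def]
    apply if_neg
    rw [hs]
    simp
  rw [h4] at h2
  exact h3 h2.symm

/-! ### A left-invariant strict order on `FreeGroup ℤ` via the Magnus embedding -/

abbrev Idx := Lex (ℕ × ℕ)

noncomputable def idxOf (w : List ℤ) : Idx := toLex (w.length, Encodable.encode w)

noncomputable def JfRaw (f : Mag) (p : Idx) : ℤ :=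
  (Encodable.decode (α := List ℤ) (ofLex p).2).elim 0
    (fun w => if Encodable.encode w = (ofLex p).2 ∧ w.length = (ofLex p).1 then f.1 w else 0)

lemma JfRaw_idxOf (f : Mag) (w : List ℤ) : JfRaw f (idxOf w) = f.1 w := by
  have hd : Encodable.decode (α := List ℤ) (ofLex (idxOf w)).2 = some w := by
    show Encodable.decode (Encodable.encode w) = some w
    exact Encodable.encodek w
  rw [JfRaw, hd, Option.elim_some]
  exact if_pos ⟨rfl, rfl⟩

lemma JfRaw_eq_zero_or (f : Mag) (p : Idx)
    (h : ∀ w : List ℤ, p ≠ idxOf w) : JfRaw f p = 0 := by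
  rw [JfRaw]
  rcases hd : Encodable.decode (α := List ℤ) (ofLex p).2 with _ | w
  · rfl
  · rw [Option.elim_some, if_neg]
    rintro ⟨h1, h2⟩
    exact h w (by
      rw [idxOf, h1, h2]
      rfl)

noncomputable def Jf (f : Mag) : Lex (Idx → ℤ) := toLex (JfRaw f)

lemma Jf_apply (f : Mag) (j : Idx) : Jf f j = JfRaw f j := rfl

lemma Jf_injective : Function.Injective Jf := by
  intro f g h
  apply Subtype.ext
  funext w
  have h2 : JfRaw f = JfRaw g := toLex.injective h
  have := congrFun h2 (idxOf w)
  rwa [JfRaw_idxOf, JfRaw_idxOf] at this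

lemma length_le_of_idx_lt {w : List ℤ} {p : Idx} (h : idxOf w < p) :
    w.length ≤ (ofLex p).1 := by
  rcases Prod.lex_def.mp h with h1 | ⟨h1, _⟩
  · exact le_of_lt h1
  · exact le_of_eq h1

lemma idx_lt_of_length_lt {w : List ℤ} {p : Idx} (h : w.length < (ofLex p).1) :
    idxOf w < p :=
  Prod.lex_def.mpr (Or.inl h)

lemma Jf_lt_mul (x f g : Mag) (h : Jf f < Jf g) : Jf (x * f) < Jf (x * g) := by
  obtain ⟨p₀, hbelow, hat⟩ := h
  simp only [Jf_apply] at hbelow hat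
  -- identify the word at p₀
  have hw₀ : ∃ w₀ : List ℤ, p₀ = idxOf w₀ := by
    by_contra hc
    push_neg at hc
    rw [JfRaw_eq_zero_or f p₀ hc, JfRaw_eq_zero_or g p₀ hc] at hat
    exact lt_irrefl 0 hat
  obtain ⟨w₀, rfl⟩ := hw₀
  have hat' : f.1 w₀ < g.1 w₀ := by
    rwa [JfRaw_idxOf, JfRaw_idxOf] at hat
  have hshort : ∀ v : List ℤ, v.length < w₀.length → f.1 v = g.1 v := by
    intro v hv
    have := hbelow (idxOf v) (idx_lt_of_length_lt hv)
    rwa [JfRaw_idxOf, JfRaw_idxOf] at this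
  have hagree : ∀ v : List ℤ, idxOf v < idxOf w₀ → f.1 v = g.1 v := by
    intro v hv
    have := hbelow (idxOf v) hv
    rwa [JfRaw_idxOf, JfRaw_idxOf] at this
  have hA : ∀ v : List ℤ, idxOf v < idxOf w₀ → (x * f).1 v = (x * g).1 v := by
    intro v hv
    have hvlen : v.length ≤ w₀.length := length_le_of_idx_lt hv
    rw [Mag.mul_def, Mag.mul_def, mulF, mulF]
    refine Finset.sum_congr rfl fun k hk => ?_
    rcases Nat.eq_zero_or_pos k with rfl | hkpos
    · rw [List.take_zero, List.drop_zero, hagree v hv]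
    · congr 1
      rcases Nat.eq_zero_or_pos v.length with hv0 | hvpos
      · have : v = [] := List.length_eq_zero_iff.mp hv0
        subst this
        rw [List.drop_nil, f.2, g.2]
      · apply hshort
        rw [List.length_drop]
        rw [Finset.mem_range] at hk
        omega
  refine ⟨idxOf w₀, ?_, ?_⟩
  · intro j hj
    simp only [Jf_apply]
    rcases Classical.em (∃ v : List ℤ, j = idxOf v) with ⟨v, rfl⟩ | hc
    · rw [JfRaw_idxOf, JfRaw_idxOf]
      exact hA v hj
    · push_neg at hc
      rw [JfRaw_eq_zero_or _ _ hc, JfRaw_eq_zero_or _ _ hc]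
  · show Jf (x * f) (idxOf w₀) < Jf (x * g) (idxOf w₀)
    simp only [Jf_apply]
    rw [JfRaw_idxOf, JfRaw_idxOf, Mag.mul_def, Mag.mul_def, mulF, mulF]
    apply Finset.sum_lt_sum
    · intro k hk
      rcases Nat.eq_zero_or_pos k with rfl | hkpos
      · rw [List.take_zero, List.drop_zero]
        rw [x.2, one_mul, one_mul]
        exact le_of_lt hat'
      · apply le_of_eq
        congr 1
        rcases Nat.eq_zero_or_pos w₀.length with hv0 | hvpos
        · have : w₀ = [] := List.length_eq_zero_iff.mp hv0
          subst this
          rw [List.drop_nil, f.2, g.2]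
        · apply hshort
          rw [List.length_drop]
          rw [Finset.mem_range] at hk
          omega
    · refine ⟨0, Finset.mem_range.mpr (by omega), ?_⟩
      rw [List.take_zero, List.drop_zero]
      rw [x.2, one_mul, one_mul]
      exact hat'

/-! ### The strict order on the free group -/

noncomputable def flt (u v : FreeGroup ℤ) : Prop := Jf (mu u) < Jf (mu v)

lemma flt_trans {u v w : FreeGroup ℤ} (h1 : flt u v) (h2 : flt v w) : flt u w :=
  lt_trans h1 h2

lemma flt_irrefl (u : FreeGroup ℤ) : ¬ flt u u := lt_irrefl _

lemma flt_trichotomy (u v : FreeGroup ℤ) : flt u v ∨ u = v ∨ flt v u := by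
  rcases lt_trichotomy (Jf (mu u)) (Jf (mu v)) with h | h | h
  · exact Or.inl h
  · exact Or.inr (Or.inl (mu_injective (Jf_injective h)))
  · exact Or.inr (Or.inr h)

lemma flt_mul_left (w : FreeGroup ℤ) {u v : FreeGroup ℤ} (h : flt u v) :
    flt (w * u) (w * v) := by
  rw [flt, map_mul, map_mul]
  exact Jf_lt_mul (mu w) _ _ h

lemma flt_one_mul {u v : FreeGroup ℤ} (h1 : flt 1 u) (h2 : flt 1 v) : flt 1 (u * v) := by
  have := flt_mul_left u h2
  rw [mul_one] at this
  exact flt_trans h1 this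

lemma flt_inv_of_lt_one {u : FreeGroup ℤ} (h : flt u 1) : flt 1 u⁻¹ := by
  have := flt_mul_left u⁻¹ h
  rwa [inv_mul_cancel, mul_one] at this

/-! ### Part B : the group `G₂`, its normal-form model, and the order -/

def rels : Set (FreeGroup (Fin 3)) :=
  {FreeGroup.of 0 * FreeGroup.of 1 * (FreeGroup.of 0)⁻¹ * FreeGroup.of 1,
    FreeGroup.of 1 * FreeGroup.of 2 * (FreeGroup.of 1)⁻¹ * FreeGroup.of 2}

abbrev GG : Type := PresentedGroup rels

def ga : GG := PresentedGroup.of 0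
def gb : GG := PresentedGroup.of 1
def gc : GG := PresentedGroup.of 2

lemma rel_one_of_mem {r : FreeGroup (Fin 3)} (h : r ∈ rels) :
    (QuotientGroup.mk r : GG) = 1 := by
  rw [QuotientGroup.eq_one_iff]
  exact Subgroup.subset_normalClosure h

lemma presented_of (i : Fin 3) :
    (PresentedGroup.of i : GG) = QuotientGroup.mk (FreeGroup.of i) := rfl

lemma mk_mul (x y : FreeGroup (Fin 3)) :
    (QuotientGroup.mk (x * y) : GG) = QuotientGroup.mk x * QuotientGroup.mk y := rfl

lemma mk_inv (x : FreeGroup (Fin 3)) :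
    (QuotientGroup.mk x⁻¹ : GG) = (QuotientGroup.mk x : GG)⁻¹ := rfl

lemma rel1 : ga * gb * ga⁻¹ * gb = 1 := by
  have := rel_one_of_mem (Or.inl rfl : (FreeGroup.of 0 * FreeGroup.of 1 * (FreeGroup.of 0)⁻¹ *
    FreeGroup.of 1) ∈ rels)
  rwa [mk_mul, mk_mul, mk_mul, mk_inv] at this

lemma rel2 : gb * gc * gb⁻¹ * gc = 1 := by
  have := rel_one_of_mem (Or.inr rfl : (FreeGroup.of 1 * FreeGroup.of 2 * (FreeGroup.of 1)⁻¹ *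
    FreeGroup.of 2) ∈ rels)
  rwa [mk_mul, mk_mul, mk_mul, mk_inv] at this

lemma rel1' : ga * gb * ga⁻¹ = gb⁻¹ := mul_eq_one_iff_eq_inv.mp rel1

lemma rel1'' : ga⁻¹ * gb * ga = gb⁻¹ := by
  have h2 : ga⁻¹ * gb⁻¹ * ga = gb := by
    rw [← rel1']; group
  rw [show ga⁻¹ * gb * ga = (ga⁻¹ * gb⁻¹ * ga)⁻¹ by group, h2]

lemma rel2' : gb * gc * gb⁻¹ = gc⁻¹ := mul_eq_one_iff_eq_inv.mp rel2

lemma rel2'' : gb⁻¹ * gc * gb = gc⁻¹ := by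
  have h2 : gb⁻¹ * gc⁻¹ * gb = gc := by
    rw [← rel2']; group
  rw [show gb⁻¹ * gc * gb = (gb⁻¹ * gc⁻¹ * gb)⁻¹ by group, h2]

/-- the key two-case conjugation of `gb` by powers of `ga` -/
lemma conj_pow_cases : ∀ t : ℤ, ga ^ t * gb * ga ^ (-t) = gb ∨ ga ^ t * gb * ga ^ (-t) = gb⁻¹ := by
  intro t
  induction t using Int.induction_on with
  | zero => left; group
  | succ k ih =>
    have step : ga ^ ((k : ℤ) + 1) * gb * ga ^ (-((k : ℤ) + 1))
        = ga * (ga ^ (k : ℤ) * gb * ga ^ (-(k : ℤ))) * ga⁻¹ := by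
      group
    rcases ih with h | h
    · right; rw [step, h, rel1']
    · left
      rw [step, h]
      have : ga * gb⁻¹ * ga⁻¹ = (ga * gb * ga⁻¹)⁻¹ := by group
      rw [this, rel1']
      group
  | pred k ih =>
    have step : ga ^ (-(k : ℤ) - 1) * gb * ga ^ (-(-(k : ℤ) - 1))
        = ga⁻¹ * (ga ^ (-(k : ℤ)) * gb * ga ^ (-(-(k : ℤ)))) * ga := by
      group
    rcases ih with h | h
    · right; rw [step, h, rel1'']
    · left
      rw [step, h]
      have : ga⁻¹ * gb⁻¹ * ga = (ga⁻¹ * gb * ga)⁻¹ := by group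
      rw [this, rel1'']
      group

lemma conj_pow_even : ∀ c : ℤ, ga ^ (2 * c) * gb * ga ^ (-(2 * c)) = gb := by
  intro c
  induction c using Int.induction_on with
  | zero => group
  | succ k ih =>
    have step : ga ^ (2 * ((k : ℤ) + 1)) * gb * ga ^ (-(2 * ((k : ℤ) + 1)))
        = ga * (ga * (ga ^ (2 * (k : ℤ)) * gb * ga ^ (-(2 * (k : ℤ)))) * ga⁻¹) * ga⁻¹ := by
      group
    rw [step, ih, rel1']
    have : ga * gb⁻¹ * ga⁻¹ = (ga * gb * ga⁻¹)⁻¹ := by group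
    rw [this, rel1']
    group
  | pred k ih =>
    have step : ga ^ (2 * (-(k : ℤ) - 1)) * gb * ga ^ (-(2 * (-(k : ℤ) - 1)))
        = ga⁻¹ * (ga⁻¹ * (ga ^ (2 * (-(k : ℤ))) * gb * ga ^ (-(2 * (-(k : ℤ))))) * ga) * ga := by
      group
    rw [step, ih, rel1'']
    have : ga⁻¹ * gb⁻¹ * ga = (ga⁻¹ * gb * ga)⁻¹ := by group
    rw [this, rel1'']
    group

lemma conj_pow_odd : ∀ c : ℤ, ga ^ (2 * c + 1) * gb * ga ^ (-(2 * c + 1)) = gb⁻¹ := by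
  intro c
  have step : ga ^ (2 * c + 1) * gb * ga ^ (-(2 * c + 1))
      = ga ^ (2 * c) * (ga * gb * ga⁻¹) * ga ^ (-(2 * c)) := by
    group
  rw [step, rel1']
  have : ga ^ (2 * c) * gb⁻¹ * ga ^ (-(2 * c))
      = (ga ^ (2 * c) * gb * ga ^ (-(2 * c)))⁻¹ := by group
  rw [this, conj_pow_even]

/-- general lemma : zpow of an involution -/
lemma zpow_invol {G : Type*} [Group G] {x : G} (hx : x * x = 1) {m : ℤ} :
    (Even m → x ^ m = 1) ∧ (Odd m → x ^ m = x) := by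
  have h2 : x ^ (2 : ℤ) = 1 := by
    rw [show (2 : ℤ) = 1 + 1 from rfl, zpow_add, zpow_one, hx]
  constructor
  · rintro ⟨c, rfl⟩
    rw [show c + c = 2 * c by ring, zpow_mul, h2, one_zpow]
  · rintro ⟨c, rfl⟩
    rw [zpow_add, zpow_mul, h2, one_zpow, one_mul, zpow_one]

/-! ### Automorphisms of the free group, and the model group `SS` -/

def sigmaE : FreeGroup ℤ ≃* FreeGroup ℤ := FreeGroup.freeGroupCongr (Equiv.addRight (1 : ℤ))

def iotaHom : FreeGroup ℤ →* FreeGroup ℤ := FreeGroup.lift (fun k => (FreeGroup.of k)⁻¹)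

lemma iotaHom_of (k : ℤ) : iotaHom (FreeGroup.of k) = (FreeGroup.of k)⁻¹ := FreeGroup.lift_apply_of

lemma iotaHom_invol : iotaHom.comp iotaHom = MonoidHom.id _ := by
  apply FreeGroup.ext_hom
  intro a
  show iotaHom (iotaHom (FreeGroup.of a)) = FreeGroup.of a
  rw [iotaHom_of, map_inv, iotaHom_of, inv_inv]

def iotaE : FreeGroup ℤ ≃* FreeGroup ℤ :=
  MonoidHom.toMulEquiv iotaHom iotaHom iotaHom_invol iotaHom_invol

def iotaAut : MulAut (FreeGroup ℤ) := iotaE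
def sigmaAut : MulAut (FreeGroup ℤ) := sigmaE

lemma iotaAut_apply (w : FreeGroup ℤ) : iotaAut w = iotaHom w := rfl

lemma sigmaAut_of (k : ℤ) : sigmaAut (FreeGroup.of k) = FreeGroup.of (k + 1) := by
  show FreeGroup.freeGroupCongr (Equiv.addRight (1 : ℤ)) (FreeGroup.of k) = _
  simp

lemma iotaAut_sq : iotaAut * iotaAut = 1 := by
  apply MulEquiv.ext
  intro x
  rw [MulAut.mul_apply, iotaAut_apply, iotaAut_apply]
  exact DFunLike.congr_fun iotaHom_invol x

lemma iotaAut_inv : iotaAut⁻¹ = iotaAut := inv_eq_of_mul_eq_one_right iotaAut_sq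

lemma iota_sigma_comm : sigmaAut * iotaAut = iotaAut * sigmaAut := by
  apply MulEquiv.ext
  intro x
  rw [MulAut.mul_apply, MulAut.mul_apply]
  have : (sigmaE.toMonoidHom.comp iotaHom) = (iotaHom.comp sigmaE.toMonoidHom) := by
    apply FreeGroup.ext_hom
    intro a
    show sigmaE (iotaHom (FreeGroup.of a)) = iotaHom (sigmaE (FreeGroup.of a))
    rw [iotaHom_of, map_inv]
    have h1 : sigmaE (FreeGroup.of a) = FreeGroup.of (a + 1) := sigmaAut_of a
    rw [h1, iotaHom_of]
  exact DFunLike.congr_fun this x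

/-! the Klein bottle group K -/

def phiK : Multiplicative ℤ →* MulAut (Multiplicative ℤ) :=
  zpowersHom _ (MulEquiv.inv (Multiplicative ℤ))

abbrev KK : Type := SemidirectProduct (Multiplicative ℤ) (Multiplicative ℤ) phiK

lemma inv_invol : (MulEquiv.inv (Multiplicative ℤ)) * (MulEquiv.inv (Multiplicative ℤ)) = 1 := by
  apply MulEquiv.ext
  intro x
  rw [MulAut.mul_apply, MulEquiv.inv_apply, MulEquiv.inv_apply, inv_inv]
  rfl

lemma phiK_apply (g : Multiplicative ℤ) :
    phiK g = (MulEquiv.inv (Multiplicative ℤ)) ^ (Multiplicative.toAdd g) :=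
  zpowersHom_apply _ _ _

lemma phiK_cases (g : Multiplicative ℤ) : phiK g = 1 ∨ phiK g = MulEquiv.inv (Multiplicative ℤ) := by
  rw [phiK_apply]
  rcases Int.even_or_odd (Multiplicative.toAdd g) with he | ho
  · exact Or.inl ((zpow_invol inv_invol).1 he)
  · exact Or.inr ((zpow_invol inv_invol).2 ho)

lemma phiK_even {g : Multiplicative ℤ} (h : Even (Multiplicative.toAdd g)) : phiK g = 1 := by
  rw [phiK_apply]; exact (zpow_invol inv_invol).1 h

lemma phiK_odd {g : Multiplicative ℤ} (h : Odd (Multiplicative.toAdd g)) :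
    phiK g = MulEquiv.inv (Multiplicative ℤ) := by
  rw [phiK_apply]; exact (zpow_invol inv_invol).2 h

/-! the action of K on the free group -/

def f1K : Multiplicative ℤ →* MulAut (FreeGroup ℤ) := zpowersHom _ iotaAut
def f2K : Multiplicative ℤ →* MulAut (FreeGroup ℤ) := zpowersHom _ sigmaAut

lemma f1K_apply (n : Multiplicative ℤ) : f1K n = iotaAut ^ (Multiplicative.toAdd n) :=
  zpowersHom_apply _ _ _

lemma f2K_apply (n : Multiplicative ℤ) : f2K n = sigmaAut ^ (Multiplicative.toAdd n) :=
  zpowersHom_apply _ _ _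

lemma iotaAut_zpow_neg (t : ℤ) : iotaAut ^ (-t) = iotaAut ^ t := by
  rw [zpow_neg, ← inv_zpow, iotaAut_inv]

lemma phiS_compat : ∀ g : Multiplicative ℤ,
    f1K.comp (MulEquiv.toMonoidHom (phiK g))
      = (MulEquiv.toMonoidHom (MulAut.conj (f2K g))).comp f1K := by
  intro g
  apply MonoidHom.ext
  intro n
  show f1K (phiK g n) = (MulAut.conj (f2K g)) (f1K n)
  rw [MulAut.conj_apply]
  have hcomm : Commute sigmaAut iotaAut := iota_sigma_comm
  have hc : Commute (f2K g) (f1K n) := by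
    rw [f1K_apply, f2K_apply]
    exact hcomm.zpow_zpow _ _
  rw [hc.eq, mul_inv_cancel_right]
  rcases phiK_cases g with h | h
  · rw [h, MulAut.one_apply]
  · rw [h]
    rw [f1K_apply, f1K_apply]
    have : Multiplicative.toAdd ((MulEquiv.inv (Multiplicative ℤ)) n)
        = -(Multiplicative.toAdd n) := rfl
    rw [this, iotaAut_zpow_neg]

def phiS : KK →* MulAut (FreeGroup ℤ) := SemidirectProduct.lift f1K f2K phiS_compat

abbrev SS : Type := SemidirectProduct (FreeGroup ℤ) KK phiS

def zz : Multiplicative ℤ := Multiplicative.ofAdd 1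

def kA : KK := SemidirectProduct.inr zz
def kB : KK := SemidirectProduct.inl zz
def sA : SS := SemidirectProduct.inr kA
def sB : SS := SemidirectProduct.inr kB
def sC : SS := SemidirectProduct.inl (FreeGroup.of 0)

lemma relK1 : kA * kB * kA⁻¹ * kB = 1 := by
  rw [kA, kB]
  have h1 : SemidirectProduct.inr (φ := phiK) zz * SemidirectProduct.inl zz *
      (SemidirectProduct.inr zz)⁻¹ = SemidirectProduct.inl (phiK zz zz) :=
    (SemidirectProduct.inl_aut zz zz).symm
  rw [h1, ← map_mul]
  have h2 : phiK zz zz * zz = 1 := by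
    have : phiK zz = MulEquiv.inv (Multiplicative ℤ) := phiK_odd (by norm_num [zz])
    rw [this, MulEquiv.inv_apply, inv_mul_cancel]
  rw [h2, map_one]

lemma relS1 : sA * sB * sA⁻¹ * sB = 1 := by
  rw [sA, sB, ← map_inv, ← map_mul, ← map_mul, ← map_mul, relK1, map_one]

lemma phiS_kB : phiS kB = iotaAut := by
  rw [kB, phiS, SemidirectProduct.lift_inl, f1K_apply]
  show iotaAut ^ ((1 : ℤ)) = iotaAut
  rw [zpow_one]

lemma relS2 : sB * sC * sB⁻¹ * sC = 1 := by
  rw [sB, sC]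
  rw [show (SemidirectProduct.inr (φ := phiS) kB)⁻¹ = SemidirectProduct.inr kB⁻¹ from
    (map_inv _ _).symm]
  have h1 : SemidirectProduct.inr (φ := phiS) kB * SemidirectProduct.inl (FreeGroup.of 0) *
      SemidirectProduct.inr kB⁻¹ = SemidirectProduct.inl (phiS kB (FreeGroup.of 0)) :=
    (SemidirectProduct.inl_aut kB (FreeGroup.of 0)).symm
  rw [h1, ← map_mul, phiS_kB, iotaAut_apply, iotaHom_of, inv_mul_cancel, map_one]

def genS : Fin 3 → SS := ![sA, sB, sC]

lemma genS_rels : ∀ r ∈ rels, (FreeGroup.lift genS) r = 1 := by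
  intro r hr
  rcases hr with rfl | hr
  · simp only [map_mul, map_inv, FreeGroup.lift_apply_of]
    show sA * sB * sA⁻¹ * sB = 1
    exact relS1
  · rcases hr with rfl
    simp only [map_mul, map_inv, FreeGroup.lift_apply_of]
    show sB * sC * sB⁻¹ * sC = 1
    exact relS2

def Theta : GG →* SS := PresentedGroup.toGroup genS_rels

/-! ### the left inverse ψ of Θ -/

def psiF : FreeGroup ℤ →* GG := FreeGroup.lift (fun k => ga ^ k * gc * ga ^ (-k))

lemma psiF_of (k : ℤ) : psiF (FreeGroup.of k) = ga ^ k * gc * ga ^ (-k) := FreeGroup.lift_apply_of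

lemma conj_gb_psiF_of (k : ℤ) :
    gb * (ga ^ k * gc * ga ^ (-k)) * gb⁻¹ = ga ^ k * gc⁻¹ * ga ^ (-k) := by
  rcases conj_pow_cases (-k) with h | h
  · calc gb * (ga ^ k * gc * ga ^ (-k)) * gb⁻¹
        = ga ^ k * ((ga ^ (-k) * gb * ga ^ (-(-k))) * gc * (ga ^ (-k) * gb * ga ^ (-(-k)))⁻¹) *
          ga ^ (-k) := by group
      _ = ga ^ k * (gb * gc * gb⁻¹) * ga ^ (-k) := by rw [h]
      _ = ga ^ k * gc⁻¹ * ga ^ (-k) := by rw [rel2']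
  · calc gb * (ga ^ k * gc * ga ^ (-k)) * gb⁻¹
        = ga ^ k * ((ga ^ (-k) * gb * ga ^ (-(-k))) * gc * (ga ^ (-k) * gb * ga ^ (-(-k)))⁻¹) *
          ga ^ (-k) := by group
      _ = ga ^ k * (gb⁻¹ * gc * (gb⁻¹)⁻¹) * ga ^ (-k) := by rw [h]
      _ = ga ^ k * gc⁻¹ * ga ^ (-k) := by rw [inv_inv, rel2'']

lemma psiF_iota : psiF.comp iotaHom = (MulAut.conj gb).toMonoidHom.comp psiF := by
  apply FreeGroup.ext_hom
  intro k
  show psiF (iotaHom (FreeGroup.of k)) = (MulAut.conj gb) (psiF (FreeGroup.of k))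
  rw [iotaHom_of, map_inv, psiF_of, MulAut.conj_apply, conj_gb_psiF_of]
  group

lemma psiF_iota_apply (w : FreeGroup ℤ) : psiF (iotaAut w) = gb * psiF w * gb⁻¹ := by
  have := DFunLike.congr_fun psiF_iota w
  exact (by simpa using this : psiF (iotaHom w) = gb * psiF w * gb⁻¹)

lemma psiF_sigma_apply (w : FreeGroup ℤ) : psiF (sigmaAut w) = ga * psiF w * ga⁻¹ := by
  have hhom : psiF.comp sigmaE.toMonoidHom = (MulAut.conj ga).toMonoidHom.comp psiF := by
    apply FreeGroup.ext_hom
    intro k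
    show psiF (sigmaE (FreeGroup.of k)) = (MulAut.conj ga) (psiF (FreeGroup.of k))
    rw [show sigmaE (FreeGroup.of k) = FreeGroup.of (k + 1) from sigmaAut_of k, psiF_of,
      MulAut.conj_apply, psiF_of]
    group
  have := DFunLike.congr_fun hhom w
  exact (by simpa using this : psiF (sigmaE w) = ga * psiF w * ga⁻¹)

lemma psiF_sigma_inv_apply (w : FreeGroup ℤ) : psiF (sigmaAut⁻¹ w) = ga⁻¹ * psiF w * ga := by
  have h := psiF_sigma_apply (sigmaAut⁻¹ w)
  rw [show sigmaAut (sigmaAut⁻¹ w) = w by rw [← MulAut.mul_apply, mul_inv_cancel, MulAut.one_apply]] at h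
  rw [h]
  group

lemma psiF_iota_inv_apply (w : FreeGroup ℤ) : psiF (iotaAut⁻¹ w) = gb⁻¹ * psiF w * gb := by
  have h := psiF_iota_apply (iotaAut⁻¹ w)
  rw [show iotaAut (iotaAut⁻¹ w) = w by rw [← MulAut.mul_apply, mul_inv_cancel, MulAut.one_apply]] at h
  rw [h]
  group

lemma psiF_iota_zpow : ∀ (t : ℤ) (w : FreeGroup ℤ),
    psiF ((iotaAut ^ t) w) = gb ^ t * psiF w * gb ^ (-t) := by
  intro t
  induction t using Int.induction_on with
  | zero => intro w; simp
  | succ k ih =>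
    intro w
    have hst : (iotaAut ^ ((k : ℤ) + 1)) w = (iotaAut ^ (k : ℤ)) (iotaAut w) := by
      rw [zpow_add, zpow_one, MulAut.mul_apply]
    rw [hst, ih, psiF_iota_apply]
    group
  | pred k ih =>
    intro w
    have hst : (iotaAut ^ (-(k : ℤ) - 1)) w = (iotaAut ^ (-(k : ℤ))) (iotaAut⁻¹ w) := by
      rw [show -(k : ℤ) - 1 = -(k : ℤ) + (-1) by ring, zpow_add, zpow_neg_one, MulAut.mul_apply]
    rw [hst, ih, psiF_iota_inv_apply]
    group

lemma psiF_sigma_zpow : ∀ (t : ℤ) (w : FreeGroup ℤ),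
    psiF ((sigmaAut ^ t) w) = ga ^ t * psiF w * ga ^ (-t) := by
  intro t
  induction t using Int.induction_on with
  | zero => intro w; simp
  | succ k ih =>
    intro w
    have hst : (sigmaAut ^ ((k : ℤ) + 1)) w = (sigmaAut ^ (k : ℤ)) (sigmaAut w) := by
      rw [zpow_add, zpow_one, MulAut.mul_apply]
    rw [hst, ih, psiF_sigma_apply]
    group
  | pred k ih =>
    intro w
    have hst : (sigmaAut ^ (-(k : ℤ) - 1)) w = (sigmaAut ^ (-(k : ℤ))) (sigmaAut⁻¹ w) := by
      rw [show -(k : ℤ) - 1 = -(k : ℤ) + (-1) by ring, zpow_add, zpow_neg_one, MulAut.mul_apply]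
    rw [hst, ih, psiF_sigma_inv_apply]
    group

/-! ψ on K -/

lemma conj_pow_even' (c : ℤ) : ga ^ (2 * c) * gb * (ga ^ (2 * c))⁻¹ = gb := by
  rw [← zpow_neg]
  exact conj_pow_even c

lemma conj_pow_odd' (c : ℤ) : ga ^ (2 * c + 1) * gb * (ga ^ (2 * c + 1))⁻¹ = gb⁻¹ := by
  rw [← zpow_neg]
  exact conj_pow_odd c

lemma psiK_compat : ∀ g : Multiplicative ℤ,
    (zpowersHom GG gb).comp (MulEquiv.toMonoidHom (phiK g))
      = (MulEquiv.toMonoidHom (MulAut.conj ((zpowersHom GG ga) g))).comp (zpowersHom GG gb) := by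
  intro g
  apply MonoidHom.ext
  intro n
  show gb ^ (Multiplicative.toAdd (phiK g n))
      = (MulAut.conj (ga ^ (Multiplicative.toAdd g))) (gb ^ (Multiplicative.toAdd n))
  set t := Multiplicative.toAdd g with ht
  set s := Multiplicative.toAdd n with hs
  have hconj : (MulAut.conj (ga ^ t)) (gb ^ s) = ((MulAut.conj (ga ^ t)) gb) ^ s :=
    map_zpow _ _ _
  rcases Int.even_or_odd t with he | ho
  · have h1 : phiK g = 1 := phiK_even he
    obtain ⟨c, hc⟩ := he
    rw [h1, MulAut.one_apply, hconj, MulAut.conj_apply,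
      show t = 2 * c by omega, conj_pow_even' c]
  · have h1 : phiK g = MulEquiv.inv (Multiplicative ℤ) := phiK_odd ho
    obtain ⟨c, hc⟩ := ho
    rw [h1, hconj, MulAut.conj_apply, show t = 2 * c + 1 by omega, conj_pow_odd' c]
    have h2 : Multiplicative.toAdd ((MulEquiv.inv (Multiplicative ℤ)) n) = -s := rfl
    rw [h2, zpow_neg, ← inv_zpow]

def psiK : KK →* GG := SemidirectProduct.lift (zpowersHom GG gb) (zpowersHom GG ga) psiK_compat

lemma psiK_apply (k : KK) :
    psiK k = gb ^ (Multiplicative.toAdd k.left) * ga ^ (Multiplicative.toAdd k.right) := rfl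

/-! ψ on SS -/

lemma phiS_apply (k : KK) :
    phiS k = (iotaAut ^ (Multiplicative.toAdd k.left)) * (sigmaAut ^ (Multiplicative.toAdd k.right)) := by
  have : phiS k = f1K k.left * f2K k.right := rfl
  rw [this, f1K_apply, f2K_apply]

lemma psiS_compat : ∀ k : KK,
    psiF.comp (MulEquiv.toMonoidHom (phiS k))
      = (MulEquiv.toMonoidHom (MulAut.conj (psiK k))).comp psiF := by
  intro k
  apply MonoidHom.ext
  intro w
  show psiF (phiS k w) = (MulAut.conj (psiK k)) (psiF w)
  rw [phiS_apply, MulAut.mul_apply, psiF_iota_zpow, psiF_sigma_zpow, MulAut.conj_apply,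
    psiK_apply]
  group

def psiS : SS →* GG := SemidirectProduct.lift psiF psiK psiS_compat

lemma psiS_Theta : psiS.comp Theta = MonoidHom.id GG := by
  apply PresentedGroup.ext
  intro i
  show psiS (Theta (PresentedGroup.of i)) = PresentedGroup.of i
  rw [show Theta (PresentedGroup.of i) = genS i from PresentedGroup.toGroup.of genS_rels]
  fin_cases i
  · show psiS sA = ga
    rw [sA, psiS, SemidirectProduct.lift_inr, kA, psiK, SemidirectProduct.lift_inr,
      zpowersHom_apply]
    show ga ^ ((1 : ℤ)) = ga
    rw [zpow_one]
  · show psiS sB = gb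
    rw [sB, psiS, SemidirectProduct.lift_inr, kB, psiK, SemidirectProduct.lift_inl,
      zpowersHom_apply]
    show gb ^ ((1 : ℤ)) = gb
    rw [zpow_one]
  · show psiS sC = gc
    rw [sC, psiS, SemidirectProduct.lift_inl, psiF_of]
    show ga ^ (0 : ℤ) * gc * ga ^ (-(0 : ℤ)) = gc
    rw [neg_zero, zpow_zero, one_mul, mul_one]

lemma Theta_injective : Function.Injective Theta := by
  intro x y h
  have hx := DFunLike.congr_fun psiS_Theta x
  have hy := DFunLike.congr_fun psiS_Theta y
  simp only [MonoidHom.comp_apply, MonoidHom.id_apply] at hx hy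
  rw [← hx, ← hy, h]

/-! ### the positive cone on `SS` and the left order on `GG` -/

noncomputable def posS (x : SS) : Prop :=
  0 < Multiplicative.toAdd x.right.right ∨ (Multiplicative.toAdd x.right.right = 0 ∧
    (0 < Multiplicative.toAdd x.right.left ∨ (Multiplicative.toAdd x.right.left = 0 ∧
      flt 1 x.left)))

lemma SS_mul_n (x y : SS) :
    Multiplicative.toAdd (x * y).right.right
      = Multiplicative.toAdd x.right.right + Multiplicative.toAdd y.right.right := by
  rw [SemidirectProduct.mul_right, SemidirectProduct.mul_right, toAdd_mul]

lemma x_right_eq_one {x : SS} (h1 : Multiplicative.toAdd x.right.right = 0)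
    (h2 : Multiplicative.toAdd x.right.left = 0) : x.right = 1 :=
  SemidirectProduct.ext (toAdd_eq_zero.mp h2) (toAdd_eq_zero.mp h1)

lemma SS_mul_m (x y : SS) (hx : x.right.right = 1) :
    Multiplicative.toAdd (x * y).right.left
      = Multiplicative.toAdd x.right.left + Multiplicative.toAdd y.right.left := by
  rw [SemidirectProduct.mul_right, SemidirectProduct.mul_left, hx, map_one, MulAut.one_apply,
    toAdd_mul]

lemma SS_mul_w (x y : SS) (hx : x.right = 1) : (x * y).left = x.left * y.left := by
  rw [SemidirectProduct.mul_left, hx, map_one, MulAut.one_apply]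

lemma posS_mul {x y : SS} (hx : posS x) (hy : posS y) : posS (x * y) := by
  rcases hx with hx1 | ⟨hx0, hx2⟩
  · left; rw [SS_mul_n]
    rcases hy with hy1 | ⟨hy0, _⟩ <;> omega
  · rcases hy with hy1 | ⟨hy0, hy2⟩
    · left; rw [SS_mul_n]; omega
    · right
      have hxr : x.right.right = 1 := toAdd_eq_zero.mp hx0
      refine ⟨by rw [SS_mul_n]; omega, ?_⟩
      rcases hx2 with hx2 | ⟨hxm, hxw⟩
      · left; rw [SS_mul_m x y hxr]
        rcases hy2 with hy2 | ⟨hym, _⟩ <;> omega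
      · rcases hy2 with hy2 | ⟨hym, hyw⟩
        · left; rw [SS_mul_m x y hxr]; omega
        · right
          refine ⟨by rw [SS_mul_m x y hxr]; omega, ?_⟩
          rw [SS_mul_w x y (x_right_eq_one hx0 hxm)]
          exact flt_one_mul hxw hyw

lemma SS_inv_n (x : SS) :
    Multiplicative.toAdd x⁻¹.right.right = - Multiplicative.toAdd x.right.right := by
  rw [SemidirectProduct.inv_right, SemidirectProduct.inv_right, toAdd_inv]

lemma SS_inv_m (x : SS) (hx : x.right.right = 1) :
    Multiplicative.toAdd x⁻¹.right.left = - Multiplicative.toAdd x.right.left := by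
  rw [SemidirectProduct.inv_right, SemidirectProduct.inv_left, hx, inv_one, map_one,
    MulAut.one_apply, toAdd_inv]

lemma SS_inv_w (x : SS) (hx : x.right = 1) : x⁻¹.left = x.left⁻¹ := by
  rw [SemidirectProduct.inv_left, hx, inv_one, map_one, MulAut.one_apply]

lemma posS_not_one : ¬ posS (1 : SS) := by
  intro h
  have e1 : (1 : SS).right.right = 1 := rfl
  have e2 : (1 : SS).right.left = 1 := rfl
  have e3 : (1 : SS).left = 1 := rfl
  rcases h with h | ⟨_, h | ⟨_, h⟩⟩
  · rw [e1, toAdd_one] at h; omega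
  · rw [e2, toAdd_one] at h; omega
  · rw [e3] at h; exact flt_irrefl 1 h

lemma posS_trichotomy (x : SS) (hx : x ≠ 1) : posS x ∨ posS x⁻¹ := by
  rcases lt_trichotomy 0 (Multiplicative.toAdd x.right.right) with h | h | h
  · exact Or.inl (Or.inl h)
  · rcases lt_trichotomy 0 (Multiplicative.toAdd x.right.left) with h2 | h2 | h2
    · exact Or.inl (Or.inr ⟨h.symm, Or.inl h2⟩)
    · -- n = 0, m = 0
      have hxr : x.right = 1 := x_right_eq_one h.symm h2.symm
      have hwne : x.left ≠ 1 := by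
        intro hw
        exact hx (SemidirectProduct.ext hw hxr)
      rcases flt_trichotomy 1 x.left with hlt | heq | hgt
      · exact Or.inl (Or.inr ⟨h.symm, Or.inr ⟨h2.symm, hlt⟩⟩)
      · exact absurd heq.symm hwne
      · right; right
        refine ⟨by rw [SS_inv_n]; omega, Or.inr ⟨?_, ?_⟩⟩
        · rw [SS_inv_m x (toAdd_eq_zero.mp h.symm)]; omega
        · rw [SS_inv_w x hxr]
          exact flt_inv_of_lt_one hgt
    · right; right
      refine ⟨by rw [SS_inv_n]; omega, Or.inl ?_⟩
      rw [SS_inv_m x (toAdd_eq_zero.mp h.symm)]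
      omega
  · right; left
    rw [SS_inv_n]
    omega

noncomputable def ltG (x y : GG) : Prop := posS (Theta (x⁻¹ * y))

theorem main : ∃ _ : LinearOrder GG, ∀ g h k : GG, h ≤ k → g * h ≤ g * k := by
  have hirr : ∀ a : GG, ¬ ltG a a := by
    intro a h
    unfold ltG at h
    rw [inv_mul_cancel, map_one] at h
    exact posS_not_one h
  have htrans : ∀ a b c : GG, ltG a b → ltG b c → ltG a c := by
    intro a b c h1 h2
    unfold ltG at h1 h2 ⊢
    have h3 := posS_mul h1 h2
    rw [← map_mul, show a⁻¹ * b * (b⁻¹ * c) = a⁻¹ * c by group] at h3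
    exact h3
  have htri : ∀ a b : GG, ltG a b ∨ a = b ∨ ltG b a := by
    intro a b
    rcases eq_or_ne a b with rfl | hne
    · exact Or.inr (Or.inl rfl)
    · have h1 : a⁻¹ * b ≠ 1 := fun h => hne (inv_mul_eq_one.mp h)
      have h2 : Theta (a⁻¹ * b) ≠ 1 :=
        fun h => h1 ((injective_iff_map_eq_one Theta).mp Theta_injective _ h)
      rcases posS_trichotomy _ h2 with hp | hp
      · exact Or.inl hp
      · right; right
        show posS (Theta (b⁻¹ * a))
        rw [show b⁻¹ * a = (a⁻¹ * b)⁻¹ by group, map_inv]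
        exact hp
  haveI hsto : IsStrictTotalOrder GG ltG :=
    { trichotomous := fun a b h1 h2 => ((htri a b).resolve_left h1).resolve_right h2, irrefl := hirr, trans := htrans }
  letI : DecidableRel ltG := Classical.decRel _
  letI lo : LinearOrder GG := linearOrderOfSTO ltG
  refine ⟨lo, ?_⟩
  intro g h k hle
  rcases lt_or_eq_of_le hle with hlt | rfl
  · apply le_of_lt
    show ltG (g * h) (g * k)
    have hhk : ltG h k := hlt
    unfold ltG at hhk ⊢
    rw [show (g * h)⁻¹ * (g * k) = h⁻¹ * k by group]
    exact hhk
  · exact le_refl _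

end G2Aux



/-- `G₂` admits a left-invariant linear order. -/
theorem G₂_left_orderable :
    ∃ _ : LinearOrder G₂, ∀ g h k : G₂, h ≤ k → g * h ≤ g * k := by
  exact G2Aux.main
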